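/- Let α be a type and let w, z be elements of the free group FreeGroup α with w ≠ z. Then the set {s : FreeGroup α | s is a letter and s * w * s⁻¹ = z} has at most two elements; that is, there do not exist three pairwise distinct letters s, t, u with s * w * s⁻¹ = t * w * t⁻¹ = u * w * u⁻¹ = z. -/

import Mathlib

/-- An element of the free group is a *letter* if it is a generator or the
inverse of a generator. -/
def IsLetter {α : Type*} (s : FreeGroup α) : Prop :=
  ∃ a : α, s = FreeGroup.of a ∨ s = (FreeGroup.of a)⁻¹

namespace ConjAux

open FreeGroup

variable {α : Type*} [DecidableEq α]

/-- Left multiplication by a letter that does not cancel with the head. -/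
lemma toWord_letter_mul (σ : α × Bool) (v : FreeGroup α)
    (h : ∀ c ∈ v.toWord.head?, c ≠ (σ.1, !σ.2)) :
    (FreeGroup.mk [σ] * v).toWord = σ :: v.toWord := by
  conv_lhs => rw [← mk_toWord (x := v), mul_mk]
  rw [toWord_mk]
  show reduce (σ :: v.toWord) = _
  rw [reduce.cons]
  rcases hv : v.toWord with _ | ⟨hd, tl⟩
  · rfl
  · have hhd : hd ≠ (σ.1, !σ.2) := h hd (by rw [hv]; rfl)
    have : reduce (hd :: tl) = hd :: tl := by rw [← hv, reduce_toWord]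
    rw [this]
    have hcond : ¬(σ.1 = hd.1 ∧ σ.2 = !hd.2) := by
      rintro ⟨h1, h2⟩
      exact hhd (Prod.ext h1.symm (by simp [h2]))
    simp [hcond]

lemma letter_of_conj (σ : α × Bool) (w z : FreeGroup α) (hwz : w ≠ z)
    (h : FreeGroup.mk [σ] * w * (FreeGroup.mk [σ])⁻¹ = z) :
    FreeGroup.mk [σ] = FreeGroup.mk (z.toWord.take 1) ∨
      FreeGroup.mk [σ] = (FreeGroup.mk (w.toWord.take 1))⁻¹ := by
  set σ' : α × Bool := (σ.1, !σ.2) with hσ'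
  have hsinv : (FreeGroup.mk [σ])⁻¹ = FreeGroup.mk [σ'] := by
    rw [inv_mk]; rfl
  have hw1 : w ≠ 1 := by
    rintro rfl
    apply hwz
    rw [mul_one, mul_inv_cancel] at h
    exact h
  -- w.toWord is nonempty
  rcases hW : w.toWord with _ | ⟨hd, tl⟩
  · exact absurd (toWord_eq_nil_iff.mp hW) hw1
  by_cases hhd : hd = σ'
  · -- s = (mk (w.toWord.take 1))⁻¹
    right
    rw [hhd]
    show FreeGroup.mk [σ] = (FreeGroup.mk [σ'])⁻¹
    rw [inv_mk, show invRev [σ'] = [σ] from by simp [invRev, hσ']]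
  · -- no cancellation at the front; analyze v := w * s⁻¹
    left
    set v : FreeGroup α := w * (FreeGroup.mk [σ])⁻¹ with hv
    have hz : FreeGroup.mk [σ] * v = z := by rw [hv, ← mul_assoc, h]
    -- compute v.toWord : either w.toWord ++ [σ'] or, with cancellation, init
    have hvword : ∀ c ∈ v.toWord.head?, c ≠ σ' := by
      -- two cases on whether the last letter of w.toWord cancels σ'
      by_cases hlast : (hd :: tl).getLast (by simp) = σ
      · -- w.toWord = M ++ [σ], v = mk M with M reduced
        obtain ⟨M, hM⟩ : ∃ M, hd :: tl = M ++ [σ] := by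
          refine ⟨(hd :: tl).dropLast, ?_⟩
          conv_lhs => rw [← List.dropLast_append_getLast (l := hd :: tl) (by simp)]
          rw [hlast]
        have hMred : reduce M = M := by
          have hWred : reduce (M ++ [σ]) = M ++ [σ] := by
            rw [← hM, ← hW, reduce_toWord, hW, hM]
          have h1 : FreeGroup.Red (reduce (M ++ [σ])) (reduce M ++ [σ]) := by
            rw [hWred]
            exact FreeGroup.Red.append_append reduce.red (FreeGroup.Red.refl)
          have h2 : M ++ [σ] = reduce M ++ [σ] := hWred ▸ reduce.min h1
          exact (List.append_left_injective [σ] h2).symm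
        have hvM : v = FreeGroup.mk M := by
          rw [hv, hsinv, ← mk_toWord (x := w), hW, hM, mul_mk]
          have : FreeGroup.mk (M ++ [σ] ++ [σ']) = FreeGroup.mk (M ++ ([σ] ++ [σ'])) := by
            rw [List.append_assoc]
          rw [this, ← mul_mk (L₁ := M), show FreeGroup.mk ([σ] ++ [σ']) = 1 from ?_, mul_one]
          · rw [← mul_mk, ← hsinv, mul_inv_cancel]
        have hvw : v.toWord = M := by rw [hvM, toWord_mk, hMred]
        rw [hvw]
        -- M is empty or starts with hd ≠ σ'
        rcases M with _ | ⟨m, Ms⟩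
        · simp
        · have : m = hd := by
            have := hM
            simp at this
            exact this.1.symm
          intro c hc
          simp at hc
          subst hc
          rw [this]
          exact hhd
      · -- no cancellation: v.toWord = w.toWord ++ [σ']
        have hred : reduce (hd :: tl ++ [σ']) = hd :: tl ++ [σ'] := by
          -- use invRev and toWord_letter_mul
          have key : (FreeGroup.mk [(σ'.1, !σ'.2)] * w⁻¹).toWord
              = (σ'.1, !σ'.2) :: w⁻¹.toWord := by
            apply toWord_letter_mul
            intro c hc hceq
            have hc' : c = σ' := by rw [hceq]; simp
            rw [toWord_inv, hW] at hc
            have hhead : (invRev (hd :: tl)).head? =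
                some (((hd :: tl).getLast (by simp)).1, !((hd :: tl).getLast (by simp)).2) := by
              show ((hd :: tl).map (fun x => (x.1, !x.2))).reverse.head? = _
              rw [List.head?_reverse, List.getLast?_map,
                List.getLast?_eq_getLast (l := hd :: tl) (by simp)]
              rfl
            rw [hhead, Option.mem_some_iff] at hc
            rw [hc', hσ'] at hc
            simp only [Prod.ext_iff] at hc
            exact hlast (Prod.ext hc.1 (Bool.not_inj hc.2))
          -- translate via invRev
          have h2 : ((w * FreeGroup.mk [σ'])⁻¹).toWord
              = (σ'.1, !σ'.2) :: w⁻¹.toWord := by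
            rw [mul_inv_rev, inv_mk]
            have : invRev [σ'] = [(σ'.1, !σ'.2)] := by simp [invRev]
            rw [this]
            exact key
          have h3 : (w * FreeGroup.mk [σ']).toWord
              = invRev ((σ'.1, !σ'.2) :: w⁻¹.toWord) := by
            rw [← invRev_invRev (L₁ := (w * FreeGroup.mk [σ']).toWord), ← toWord_inv, h2]
          have h4 : invRev ((σ'.1, !σ'.2) :: w⁻¹.toWord)
              = w.toWord ++ [σ'] := by
            have : ((σ'.1, !σ'.2) :: w⁻¹.toWord) = invRev (w.toWord ++ [σ']) := by
              rw [toWord_inv]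
              simp [invRev]
            rw [this, invRev_invRev]
          have h5 : (w * FreeGroup.mk [σ']).toWord = w.toWord ++ [σ'] := by rw [h3, h4]
          have h6 : (w * FreeGroup.mk [σ']).toWord = reduce (w.toWord ++ [σ']) := by
            conv_lhs => rw [← mk_toWord (x := w), mul_mk, toWord_mk]
          rw [← hW, ← h6]
          exact h5
        have : v.toWord = hd :: tl ++ [σ'] := by
          rw [hv, hsinv, ← mk_toWord (x := w), mul_mk, toWord_mk, hW, hred]
        rw [this]
        intro c hc
        simp at hc
        subst hc
        exact hhd
    have := toWord_letter_mul σ v hvword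
    rw [hz] at this
    rw [this]
    rfl

end ConjAux

/-- For `w ≠ z` in a free group, the set of letters `s` with `s * w * s⁻¹ = z`
has at most two elements: there are no three pairwise distinct such letters. -/
theorem conjugation_at_most_two {α : Type*} (w z : FreeGroup α) (hwz : w ≠ z) :
    {s : FreeGroup α | IsLetter s ∧ s * w * s⁻¹ = z}.encard ≤ 2 := by
  letI := Classical.decEq α
  have hsub : {s : FreeGroup α | IsLetter s ∧ s * w * s⁻¹ = z} ⊆
      {FreeGroup.mk (z.toWord.take 1), (FreeGroup.mk (w.toWord.take 1))⁻¹} := by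
    rintro s ⟨⟨a, ha⟩, hconj⟩
    have : ∃ σ : α × Bool, s = FreeGroup.mk [σ] := by
      rcases ha with ha | ha
      · exact ⟨(a, true), ha⟩
      · refine ⟨(a, false), ?_⟩
        rw [ha, show FreeGroup.of a = FreeGroup.mk [(a, true)] from rfl, FreeGroup.inv_mk]
        rfl
    obtain ⟨σ, rfl⟩ := this
    rcases ConjAux.letter_of_conj σ w z hwz hconj with h | h
    · exact Or.inl h
    · exact Or.inr h
  calc ({s : FreeGroup α | IsLetter s ∧ s * w * s⁻¹ = z}).encard
      ≤ ({FreeGroup.mk (z.toWord.take 1), (FreeGroup.mk (w.toWord.take 1))⁻¹} :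
        Set (FreeGroup α)).encard := Set.encard_mono hsub
    _ ≤ ({(FreeGroup.mk (w.toWord.take 1))⁻¹} : Set (FreeGroup α)).encard + 1 :=
        Set.encard_insert_le _ _
    _ ≤ 2 := by rw [Set.encard_singleton]; norm_num
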